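/- Let $\Sigma, \widehat{\Sigma}$ be symmetric positive semidefinite $d\times d$ real matrices, let $\bar\lambda > 0$ satisfy $2\|\widehat{\Sigma} - \Sigma\|_\infty \leq \bar\lambda$, and let $\lambda > \bar\lambda$. Let $\widehat{\Sigma}^\lambda$ be obtained from $\widehat{\Sigma}$ by soft-thresholding its eigenvalues at level $\lambda/2$ (i.e., replacing each eigenvalue $s_k$ by $\max\{s_k - \lambda/2, 0\}$ in the spectral decomposition). Then $\mathrm{rank}(\Sigma; \lambda) \leq \mathrm{rank}(\widehat{\Sigma}^\lambda) \leq \mathrm{rank}(\Sigma; \tfrac{1}{2}(\lambda - \bar\lambda))$, where $\mathrm{rank}(A;\varepsilon)$ denotes the number of singular values of $A$ that are $\geq \varepsilon$. -/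

import Mathlib

open Matrix MeasureTheory Finset

/-- Singular values of a real matrix (as square roots of the eigenvalues of `Aᴴ * A`),
indexed by columns; not necessarily sorted. -/
noncomputable def sval {m q : ℕ} (A : Matrix (Fin m) (Fin q) ℝ) (k : Fin q) : ℝ :=
  Real.sqrt ((show (Aᵀ * A).IsHermitian by simpa using Matrix.isHermitian_conjTranspose_mul_self A).eigenvalues k)

/-- Nuclear (Schatten-1) norm: sum of singular values. -/
noncomputable def nucNorm {m q : ℕ} (A : Matrix (Fin m) (Fin q) ℝ) : ℝ :=
  ∑ k, sval A k

/-- Frobenius (Schatten-2) norm. -/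
noncomputable def frobNorm {m q : ℕ} (A : Matrix (Fin m) (Fin q) ℝ) : ℝ :=
  Real.sqrt (Matrix.trace (Aᴴ * A))

/-- Spectral norm: largest singular value. -/
noncomputable def specNorm {m q : ℕ} (A : Matrix (Fin m) (Fin q) ℝ) : ℝ :=
  ⨆ k, sval A k

/-- `rankAt A ε`: number of singular values of `A` that are `≥ ε`. -/
noncomputable def rankAt {m q : ℕ} (A : Matrix (Fin m) (Fin q) ℝ) (ε : ℝ) : ℕ :=
  Nat.card {k : Fin q // ε ≤ sval A k}

/-- `svalOrd A k`: the `(k+1)`-th largest singular value of `A`. -/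
noncomputable def svalOrd {m q : ℕ} (A : Matrix (Fin m) (Fin q) ℝ) (k : Fin q) : ℝ :=
  sSup {t : ℝ | (k : ℕ) + 1 ≤ rankAt A t}

namespace RankSandwichAux


variable {d : ℕ}

/-- Orthonormality of a family of vectors w.r.t. the dot product. -/
abbrev Ortho (v : Fin d → Fin d → ℝ) : Prop :=
  ∀ i j, v i ⬝ᵥ v j = if i = j then (1 : ℝ) else 0

lemma dot_sum {ι : Type*} (s : Finset ι) (u : Fin d → ℝ) (f : ι → Fin d → ℝ) :
    u ⬝ᵥ (∑ k ∈ s, f k) = ∑ k ∈ s, u ⬝ᵥ f k := by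
  simp only [dotProduct, Finset.sum_apply, Finset.mul_sum]
  exact Finset.sum_comm

lemma sum_mulVec' {ι : Type*} (s : Finset ι) (A : ι → Matrix (Fin d) (Fin d) ℝ)
    (x : Fin d → ℝ) : (∑ k ∈ s, A k) *ᵥ x = ∑ k ∈ s, A k *ᵥ x := by
  ext i
  simp only [mulVec, dotProduct, Finset.sum_apply, Matrix.sum_apply, Finset.sum_mul]
  exact Finset.sum_comm

lemma vecMulVec_mulVec' (a b x : Fin d → ℝ) :
    vecMulVec a b *ᵥ x = (b ⬝ᵥ x) • a := by
  ext i
  simp only [mulVec, dotProduct, vecMulVec_apply, Pi.smul_apply, smul_eq_mul,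
    Finset.sum_mul]
  exact Finset.sum_congr rfl fun j _ => by ring

lemma decomp_mulVec (p : Fin d → ℝ) (v : Fin d → Fin d → ℝ) (x : Fin d → ℝ) :
    (∑ k, p k • vecMulVec (v k) (v k)) *ᵥ x = ∑ k, (p k * (v k ⬝ᵥ x)) • v k := by
  rw [sum_mulVec']
  refine Finset.sum_congr rfl fun k _ => ?_
  rw [smul_mulVec, vecMulVec_mulVec', smul_smul]

lemma quadForm (p : Fin d → ℝ) (v : Fin d → Fin d → ℝ) (x : Fin d → ℝ) :
    x ⬝ᵥ ((∑ k, p k • vecMulVec (v k) (v k)) *ᵥ x) = ∑ k, p k * (v k ⬝ᵥ x) ^ 2 := by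
  rw [decomp_mulVec, dot_sum]
  refine Finset.sum_congr rfl fun k _ => ?_
  rw [dotProduct_smul, smul_eq_mul, dotProduct_comm x (v k)]
  ring

lemma ortho_li {v : Fin d → Fin d → ℝ} (hv : Ortho v) : LinearIndependent ℝ v := by
  rw [Fintype.linearIndependent_iff]
  intro g hg j
  have h := congrArg (fun x => v j ⬝ᵥ x) hg
  simp only [dot_sum, dotProduct_smul, smul_eq_mul, hv, dotProduct_zero, mul_ite, mul_one,
    mul_zero, Finset.sum_ite_eq, Finset.sum_ite_eq', Finset.mem_univ, if_true] at h
  exact h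

/-- Expansion of a vector in an orthonormal basis. -/
lemma expansion {v : Fin d → Fin d → ℝ} (hv : Ortho v) (x : Fin d → ℝ) :
    ∑ k, (v k ⬝ᵥ x) • v k = x := by
  classical
  have hsp : Submodule.span ℝ (Set.range v) = ⊤ := by
    apply Submodule.eq_top_of_finrank_eq
    rw [finrank_span_eq_card (ortho_li hv)]
    simp [Module.finrank_fintype_fun_eq_card]
  let b : Module.Basis (Fin d) ℝ (Fin d → ℝ) := Module.Basis.mk (ortho_li hv) (by rw [hsp])
  have hb : ⇑b = v := Module.Basis.coe_mk _ _
  let L : (Fin d → ℝ) →ₗ[ℝ] (Fin d → ℝ) :=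
    { toFun := fun x => ∑ k, (v k ⬝ᵥ x) • v k
      map_add' := by
        intro a c
        simp only [dotProduct_add, add_smul]
        exact Finset.sum_add_distrib
      map_smul' := by
        intro r a
        simp only [dotProduct_smul, smul_eq_mul, RingHom.id_apply, Finset.smul_sum,
          smul_smul] }
  have : L = LinearMap.id := by
    apply b.ext
    intro j
    simp only [L, LinearMap.coe_mk, AddHom.coe_mk, LinearMap.id_coe, id_eq, hb]
    simp only [hv, ite_smul, one_smul, zero_smul, Finset.sum_ite_eq, Finset.sum_ite_eq', Finset.mem_univ, if_true]
  exact congrFun (congrArg (fun f => f.toFun) this) x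

lemma parseval {v : Fin d → Fin d → ℝ} (hv : Ortho v) (x : Fin d → ℝ) :
    ∑ k, (v k ⬝ᵥ x) ^ 2 = x ⬝ᵥ x := by
  have h := dot_sum (Finset.univ) x (fun k => (v k ⬝ᵥ x) • v k)
  rw [expansion hv x] at h
  rw [h]
  refine Finset.sum_congr rfl fun k _ => ?_
  rw [dotProduct_smul, smul_eq_mul, dotProduct_comm x (v k)]
  ring

lemma mem_span_orth {v : Fin d → Fin d → ℝ} (hv : Ortho v) (P : Fin d → Prop)
    (x : Fin d → ℝ) :
    x ∈ Submodule.span ℝ (v '' {k | P k}) ↔ ∀ k, ¬ P k → v k ⬝ᵥ x = 0 := by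
  classical
  constructor
  · intro hx k hk
    induction hx using Submodule.span_induction with
    | mem y hy =>
      obtain ⟨j, hj, rfl⟩ := hy
      have : k ≠ j := fun h => hk (h ▸ hj)
      simp [hv k j, this]
    | zero => simp
    | add y z _ _ hy hz => simp [dotProduct_add, hy, hz]
    | smul r y _ hy => simp [dotProduct_smul, hy]
  · intro h
    rw [← expansion hv x]
    refine Submodule.sum_mem _ fun k _ => ?_
    by_cases hk : P k
    · exact Submodule.smul_mem _ _ (Submodule.subset_span ⟨k, hk, rfl⟩)
    · rw [h k hk]
      simp

lemma finrank_span_orth {v : Fin d → Fin d → ℝ} (hv : Ortho v) (P : Fin d → Prop) :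
    Module.finrank ℝ (Submodule.span ℝ (v '' {k | P k})) = Nat.card {k : Fin d // P k} := by
  classical
  have h1 : v '' {k | P k} = Set.range (fun k : {k : Fin d // P k} => v k.1) := by
    ext y
    simp [Set.mem_image, Set.mem_range, Subtype.exists]
  have hli : LinearIndependent ℝ (fun k : {k : Fin d // P k} => v k.1) :=
    (ortho_li hv).comp Subtype.val Subtype.val_injective
  rw [h1, finrank_span_eq_card hli, Nat.card_eq_fintype_card]

/-- number of entries of `p` that are `≥ c` -/
noncomputable def cnt (p : Fin d → ℝ) (c : ℝ) : ℕ := Nat.card {k : Fin d // c ≤ p k}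

lemma cnt_compl (q : Fin d → ℝ) (c : ℝ) :
    Nat.card {k : Fin d // q k < c} + cnt q c = d := by
  classical
  simp only [cnt, Nat.card_eq_fintype_card, Fintype.card_subtype]
  have : Finset.filter (fun k => q k < c) Finset.univ
      = Finset.filter (fun k => ¬ c ≤ q k) Finset.univ := by
    refine Finset.filter_congr fun k _ => ?_
    simp [not_le]
  rw [this]
  rw [add_comm]
  simpa using Finset.card_filter_add_card_filter_not (s := (Finset.univ : Finset (Fin d)))
    (p := fun k => c ≤ q k)

/-- Main counting perturbation lemma. -/
lemma ML {v w : Fin d → Fin d → ℝ} (hv : Ortho v) (hw : Ortho w)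
    (p q : Fin d → ℝ) {δ c : ℝ}
    (hPQ : ∀ x : Fin d → ℝ,
      x ⬝ᵥ ((∑ k, p k • vecMulVec (v k) (v k)) *ᵥ x)
        - x ⬝ᵥ ((∑ k, q k • vecMulVec (w k) (w k)) *ᵥ x) ≤ δ * (x ⬝ᵥ x)) :
    cnt p c ≤ cnt q (c - δ) := by
  classical
  set V := Submodule.span ℝ (v '' {k | c ≤ p k}) with hV
  set W := Submodule.span ℝ (w '' {k | q k < c - δ}) with hW
  have hdisj : V ⊓ W = ⊥ := by
    rw [Submodule.eq_bot_iff]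
    rintro x ⟨hxV, hxW⟩
    by_contra hx0
    have hxx : 0 < x ⬝ᵥ x := by
      rcases (Function.ne_iff).mp hx0 with ⟨i, hi⟩
      have : 0 < x i * x i := mul_self_pos.mpr hi
      calc (0:ℝ) < x i * x i := this
        _ ≤ ∑ j, x j * x j := Finset.single_le_sum (fun j _ => mul_self_nonneg (x j))
              (Finset.mem_univ i)
        _ = x ⬝ᵥ x := rfl
    have hVco := (mem_span_orth hv _ x).mp hxV
    have hWco := (mem_span_orth hw _ x).mp hxW
    have hP : c * (x ⬝ᵥ x) ≤ x ⬝ᵥ ((∑ k, p k • vecMulVec (v k) (v k)) *ᵥ x) := by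
      rw [quadForm, ← parseval hv x, Finset.mul_sum]
      refine Finset.sum_le_sum fun k _ => ?_
      by_cases hk : c ≤ p k
      · exact mul_le_mul_of_nonneg_right hk (sq_nonneg _)
      · rw [hVco k hk]
        simp
    have hQ : x ⬝ᵥ ((∑ k, q k • vecMulVec (w k) (w k)) *ᵥ x) < (c - δ) * (x ⬝ᵥ x) := by
      rw [quadForm, ← parseval hw x, Finset.mul_sum]
      have hex : ∃ k ∈ Finset.univ, q k * (w k ⬝ᵥ x) ^ 2 < (c - δ) * (w k ⬝ᵥ x) ^ 2 := by
        have : ∃ k, (w k ⬝ᵥ x) ^ 2 ≠ 0 := by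
          by_contra hall
          push_neg at hall
          have : x ⬝ᵥ x = 0 := by
            rw [← parseval hw x]
            exact Finset.sum_eq_zero fun k _ => hall k
          linarith
        obtain ⟨k, hk⟩ := this
        have hqk : q k < c - δ := by
          by_contra hq
          exact hk (by rw [hWco k (by simpa using hq)]; ring)
        exact ⟨k, Finset.mem_univ k,
          mul_lt_mul_of_pos_right hqk (lt_of_le_of_ne (sq_nonneg _) (Ne.symm hk))⟩
      refine Finset.sum_lt_sum (fun k _ => ?_) hex
      by_cases hk : q k < c - δ
      · exact mul_le_mul_of_nonneg_right hk.le (sq_nonneg _)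
      · rw [hWco k hk]
        simp
    have := hPQ x
    nlinarith
  have hrk : Module.finrank ℝ V + Module.finrank ℝ W ≤ d := by
    have := Submodule.finrank_sup_add_finrank_inf_eq V W
    rw [hdisj] at this
    simp only [finrank_bot, add_zero] at this
    rw [← this]
    have hle : Module.finrank ℝ ↥(V ⊔ W) ≤ Module.finrank ℝ (Fin d → ℝ) :=
      Submodule.finrank_le _
    simpa [Module.finrank_fintype_fun_eq_card] using hle
  have hVrk : Module.finrank ℝ V = cnt p c := finrank_span_orth hv _
  have hWrk : Module.finrank ℝ W = Nat.card {k : Fin d // q k < c - δ} :=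
    finrank_span_orth hw _
  have hcompl := cnt_compl q (c - δ)
  omega



/-- columns of the eigenvector unitary of a real Hermitian matrix -/
noncomputable def cols {M : Matrix (Fin d) (Fin d) ℝ} (hM : M.IsHermitian) :
    Fin d → Fin d → ℝ :=
  fun k i => (hM.eigenvectorUnitary : Matrix (Fin d) (Fin d) ℝ) i k

lemma cols_ortho {M : Matrix (Fin d) (Fin d) ℝ} (hM : M.IsHermitian) :
    Ortho (cols hM) := by
  intro i j
  have h : (star (hM.eigenvectorUnitary : Matrix (Fin d) (Fin d) ℝ)) *
      (hM.eigenvectorUnitary : Matrix (Fin d) (Fin d) ℝ) = 1 := by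
    exact_mod_cast Unitary.coe_star_mul_self hM.eigenvectorUnitary
  have h2 := congrFun (congrFun h i) j
  simp only [Matrix.mul_apply, Matrix.star_apply, star_trivial, Matrix.one_apply] at h2
  simpa [cols, dotProduct] using h2

lemma spec_decomp {M : Matrix (Fin d) (Fin d) ℝ} (hM : M.IsHermitian) :
    M = ∑ k, hM.eigenvalues k • vecMulVec (cols hM k) (cols hM k) := by
  conv_lhs => rw [hM.spectral_theorem]
  ext i j
  simp only [Unitary.conjStarAlgAut_apply, Matrix.mul_apply, Matrix.diagonal_apply, Function.comp_apply, Matrix.star_apply,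
    star_trivial, ite_mul, zero_mul, mul_ite, mul_zero, Finset.sum_ite_eq, Finset.sum_ite_eq',
    Finset.mem_univ, if_true, Matrix.sum_apply, Matrix.smul_apply, vecMulVec_apply,
    smul_eq_mul, cols, RCLike.ofReal_real_eq_id, id_eq]
  exact Finset.sum_congr rfl fun k _ => by ring

lemma cnt_eq_of_decomps {v w : Fin d → Fin d → ℝ} (hv : Ortho v) (hw : Ortho w)
    {p q : Fin d → ℝ}
    (h : ∑ k, p k • vecMulVec (v k) (v k) = ∑ k, q k • vecMulVec (w k) (w k)) (c : ℝ) :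
    cnt p c = cnt q c := by
  have h1 := ML hv hw p q (δ := 0) (c := c) (fun x => by rw [h]; simp)
  have h2 := ML hw hv q p (δ := 0) (c := c) (fun x => by rw [h]; simp)
  rw [sub_zero] at h1 h2
  omega

lemma dot_self_nonneg (x : Fin d → ℝ) : 0 ≤ x ⬝ᵥ x :=
  Finset.sum_nonneg fun i _ => mul_self_nonneg (x i)

lemma specNorm_nonneg (E : Matrix (Fin d) (Fin d) ℝ) : 0 ≤ specNorm E :=
  Real.iSup_nonneg fun k => Real.sqrt_nonneg _

lemma eig_le_sq_specNorm (E : Matrix (Fin d) (Fin d) ℝ) (k : Fin d) :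
    ((show (Eᵀ * E).IsHermitian by simpa using Matrix.isHermitian_conjTranspose_mul_self E)).eigenvalues k ≤ (specNorm E) ^ 2 := by
  have h0 : 0 ≤ ((show (Eᵀ * E).IsHermitian by simpa using Matrix.isHermitian_conjTranspose_mul_self E)).eigenvalues k :=
    (Matrix.posSemidef_conjTranspose_mul_self E).eigenvalues_nonneg k
  have h1 : sval E k ≤ specNorm E := le_ciSup (Set.Finite.bddAbove (Set.finite_range _)) k
  calc ((show (Eᵀ * E).IsHermitian by simpa using Matrix.isHermitian_conjTranspose_mul_self E)).eigenvalues k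
      = (sval E k) ^ 2 := (Real.sq_sqrt h0).symm
    _ ≤ (specNorm E) ^ 2 := pow_le_pow_left₀ (Real.sqrt_nonneg _) h1 2

lemma quad_abs_le (E : Matrix (Fin d) (Fin d) ℝ) (x : Fin d → ℝ) :
    |x ⬝ᵥ (E *ᵥ x)| ≤ specNorm E * (x ⬝ᵥ x) := by
  have hN : (Eᴴ * E).IsHermitian := Matrix.isHermitian_conjTranspose_mul_self E
  have hEx : (E *ᵥ x) ⬝ᵥ (E *ᵥ x) = x ⬝ᵥ ((Eᴴ * E) *ᵥ x) := by
    conv_rhs => rw [← Matrix.mulVec_mulVec, Matrix.dotProduct_mulVec,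
      Matrix.conjTranspose_eq_transpose_of_trivial, Matrix.vecMul_transpose]
  have hquad : x ⬝ᵥ ((Eᴴ * E) *ᵥ x) ≤ (specNorm E) ^ 2 * (x ⬝ᵥ x) := by
    conv_lhs => rw [spec_decomp hN]
    rw [quadForm, ← parseval (cols_ortho hN) x, Finset.mul_sum]
    exact Finset.sum_le_sum fun k _ =>
      mul_le_mul_of_nonneg_right (eig_le_sq_specNorm E k) (sq_nonneg _)
  have hcs : (x ⬝ᵥ (E *ᵥ x)) ^ 2 ≤ (x ⬝ᵥ x) * ((E *ᵥ x) ⬝ᵥ (E *ᵥ x)) := by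
    have h := Finset.sum_mul_sq_le_sq_mul_sq Finset.univ x (E *ᵥ x)
    simpa [dotProduct, pow_two] using h
  have h1 : 0 ≤ x ⬝ᵥ x := dot_self_nonneg x
  have h2 : 0 ≤ specNorm E := specNorm_nonneg E
  have h3 : (x ⬝ᵥ (E *ᵥ x)) ^ 2 ≤ (specNorm E * (x ⬝ᵥ x)) ^ 2 := by nlinarith
  have h4 := abs_le_of_sq_le_sq' h3 (by positivity)
  exact abs_le.mpr h4

lemma vecMulVec_mul (a b c e : Fin d → ℝ) :
    vecMulVec a b * vecMulVec c e = (b ⬝ᵥ c) • vecMulVec a e := by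
  ext i j
  simp only [Matrix.mul_apply, vecMulVec_apply, Matrix.smul_apply, smul_eq_mul, dotProduct,
    Finset.sum_mul]
  exact Finset.sum_congr rfl fun m _ => by ring

lemma decomp_mul {v : Fin d → Fin d → ℝ} (hv : Ortho v) (p q : Fin d → ℝ) :
    (∑ k, p k • vecMulVec (v k) (v k)) * (∑ k, q k • vecMulVec (v k) (v k))
      = ∑ k, (p k * q k) • vecMulVec (v k) (v k) := by
  classical
  rw [Finset.sum_mul]
  refine Finset.sum_congr rfl fun k _ => ?_
  rw [Finset.mul_sum]
  have key : ∀ j, (p k • vecMulVec (v k) (v k)) * (q j • vecMulVec (v j) (v j))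
      = if j = k then (p k * q k) • vecMulVec (v k) (v k) else 0 := by
    intro j
    rw [Matrix.smul_mul, Matrix.mul_smul, vecMulVec_mul, hv k j]
    by_cases h : k = j
    · subst h
      simp [smul_smul, mul_comm]
    · simp only [if_neg (Ne.symm h)]
      simp [h]
  rw [Finset.sum_congr rfl fun j _ => key j]
  simp

lemma rank_decomp {v : Fin d → Fin d → ℝ} (hv : Ortho v) (t : Fin d → ℝ) :
    (∑ k, t k • vecMulVec (v k) (v k)).rank = Nat.card {k : Fin d // t k ≠ 0} := by
  classical
  have hrange : LinearMap.range (∑ k, t k • vecMulVec (v k) (v k)).mulVecLin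
      = Submodule.span ℝ (v '' {k | t k ≠ 0}) := by
    apply le_antisymm
    · rintro y ⟨x, rfl⟩
      rw [Matrix.mulVecLin_apply, decomp_mulVec]
      refine Submodule.sum_mem _ fun k _ => ?_
      by_cases hk : t k = 0
      · simp [hk]
      · exact Submodule.smul_mem _ _ (Submodule.subset_span ⟨k, hk, rfl⟩)
    · rw [Submodule.span_le]
      rintro y ⟨j, hj, rfl⟩
      refine ⟨(t j)⁻¹ • v j, ?_⟩
      rw [Matrix.mulVecLin_apply, Matrix.mulVec_smul, decomp_mulVec]
      have : ∀ k, (t k * (v k ⬝ᵥ v j)) • v k = if k = j then t j • v j else 0 := by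
        intro k
        rw [hv k j]
        by_cases h : k = j
        · subst h; simp
        · simp [h]
      rw [Finset.sum_congr rfl fun k _ => this k]
      simp only [Finset.sum_ite_eq, Finset.sum_ite_eq', Finset.mem_univ, if_true]
      rw [smul_smul, inv_mul_cancel₀ hj, one_smul]
  rw [Matrix.rank, hrange, finrank_span_orth hv]

lemma rankAt_eq_cnt {S : Matrix (Fin d) (Fin d) ℝ} (hS : S.PosSemidef) {ε : ℝ} (hε : 0 ≤ ε) :
    rankAt S ε = cnt (hS.isHermitian.eigenvalues) ε := by
  classical
  have hH : S.IsHermitian := hS.isHermitian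
  have hps : ∀ k, 0 ≤ hH.eigenvalues k := hS.eigenvalues_nonneg
  have hN : (Sᴴ * S).IsHermitian := Matrix.isHermitian_conjTranspose_mul_self S
  have hSS : Sᴴ * S = ∑ k, (hH.eigenvalues k * hH.eigenvalues k) •
      vecMulVec (cols hH k) (cols hH k) := by
    rw [hH.eq]
    conv_lhs => rw [spec_decomp hH]
    exact decomp_mul (cols_ortho hH) _ _
  have h1 : rankAt S ε = cnt hN.eigenvalues (ε ^ 2) := by
    unfold rankAt cnt sval
    apply Nat.card_congr
    apply Equiv.subtypeEquivRight
    intro k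
    exact Real.le_sqrt hε ((Matrix.posSemidef_conjTranspose_mul_self S).eigenvalues_nonneg k)
  have h2 : cnt hN.eigenvalues (ε ^ 2)
      = cnt (fun k => hH.eigenvalues k * hH.eigenvalues k) (ε ^ 2) :=
    cnt_eq_of_decomps (cols_ortho hN) (cols_ortho hH) ((spec_decomp hN).symm.trans hSS) _
  have h3 : cnt (fun k => hH.eigenvalues k * hH.eigenvalues k) (ε ^ 2)
      = cnt hH.eigenvalues ε := by
    unfold cnt
    apply Nat.card_congr
    apply Equiv.subtypeEquivRight
    intro k
    constructor
    · intro h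
      have h' : ε ^ 2 ≤ hH.eigenvalues k ^ 2 := by simpa [pow_two] using h
      exact le_of_pow_le_pow_left₀ two_ne_zero (hps k) h'
    · intro h
      have h' := pow_le_pow_left₀ hε h 2
      simpa [pow_two] using h'
  rw [h1, h2, h3]

end RankSandwichAux

open RankSandwichAux

/-- Sandwich bound on the rank of the soft-thresholded estimator. -/
theorem rank_sandwich {d : ℕ}
    (Sig Shat : Matrix (Fin d) (Fin d) ℝ)
    (hSig : Sig.PosSemidef) (hShatP : Shat.PosSemidef)
    (s : Fin d → ℝ) (u : Fin d → (Fin d → ℝ)) (hs : ∀ k, 0 ≤ s k)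
    (hu : ∀ i j, u i ⬝ᵥ u j = if i = j then (1 : ℝ) else 0)
    (hShat : Shat = ∑ k, s k • Matrix.vecMulVec (u k) (u k))
    (lbar lam : ℝ) (hlbar : 0 < lbar)
    (hclose : 2 * specNorm (Shat - Sig) ≤ lbar) (hll : lbar < lam)
    (Slam : Matrix (Fin d) (Fin d) ℝ)
    (hSlam : Slam = ∑ k, max (s k - lam / 2) 0 • Matrix.vecMulVec (u k) (u k)) :
    rankAt Sig lam ≤ Slam.rank ∧ Slam.rank ≤ rankAt Sig ((lam - lbar) / 2) := by
  classical
  have hSdec : Sig = ∑ k, hSig.isHermitian.eigenvalues k •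
      Matrix.vecMulVec (cols hSig.isHermitian k) (cols hSig.isHermitian k) :=
    spec_decomp hSig.isHermitian
  have hvS : Ortho (cols hSig.isHermitian) := cols_ortho hSig.isHermitian
  have huO : Ortho u := hu
  have hlam : 0 < lam := hlbar.trans hll
  have hδ : specNorm (Shat - Sig) ≤ lbar / 2 := by linarith
  have hquad : ∀ x : Fin d → ℝ,
      |x ⬝ᵥ (Shat *ᵥ x) - x ⬝ᵥ (Sig *ᵥ x)| ≤ lbar / 2 * (x ⬝ᵥ x) := by
    intro x
    have h := quad_abs_le (Shat - Sig) x
    rw [Matrix.sub_mulVec, dotProduct_sub] at h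
    exact h.trans (mul_le_mul_of_nonneg_right hδ (dot_self_nonneg x))
  have hml1 : cnt hSig.isHermitian.eigenvalues lam ≤ cnt s (lam - lbar / 2) := by
    apply ML hvS huO
    intro x
    rw [← hSdec, ← hShat]
    have h := abs_le.mp (hquad x)
    linarith [h.1]
  have hml2 : cnt s (lam / 2) ≤ cnt hSig.isHermitian.eigenvalues (lam / 2 - lbar / 2) := by
    apply ML huO hvS
    intro x
    rw [← hSdec, ← hShat]
    have h := abs_le.mp (hquad x)
    linarith [h.2]
  have hrank : Slam.rank = Nat.card {k : Fin d // max (s k - lam / 2) 0 ≠ 0} := by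
    rw [hSlam]
    exact rank_decomp huO _
  have ht : ∀ k, max (s k - lam / 2) 0 ≠ 0 ↔ lam / 2 < s k := by
    intro k
    constructor
    · intro h
      by_contra hle
      push_neg at hle
      exact h (max_eq_right (by linarith))
    · intro h
      have h0 : (0:ℝ) < max (s k - lam / 2) 0 := lt_max_iff.mpr (Or.inl (by linarith))
      exact ne_of_gt h0
  constructor
  · rw [rankAt_eq_cnt hSig hlam.le, hrank]
    refine hml1.trans ?_
    unfold cnt
    rw [Nat.card_eq_fintype_card, Nat.card_eq_fintype_card]
    apply Fintype.card_subtype_mono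
    intro k hk
    rw [ht k]
    linarith
  · rw [rankAt_eq_cnt hSig (by linarith), hrank]
    have hstep : Nat.card {k : Fin d // max (s k - lam / 2) 0 ≠ 0} ≤ cnt s (lam / 2) := by
      unfold cnt
      rw [Nat.card_eq_fintype_card, Nat.card_eq_fintype_card]
      apply Fintype.card_subtype_mono
      intro k hk
      exact ((ht k).mp hk).le
    have heq : lam / 2 - lbar / 2 = (lam - lbar) / 2 := by ring
    calc Nat.card {k : Fin d // max (s k - lam / 2) 0 ≠ 0}
        ≤ cnt s (lam / 2) := hstep
      _ ≤ cnt hSig.isHermitian.eigenvalues (lam / 2 - lbar / 2) := hml2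
      _ = cnt hSig.isHermitian.eigenvalues ((lam - lbar) / 2) := by rw [heq]
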